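/- Let G be a finite group, H ≤ G, and let S be a simple real G-module with G-invariant inner product, character σ, and endomorphism ring 𝔻 = End_{ℝG}(S). Let w₁,…,w_m be a 𝔻-basis of the fixed space W = Fix_S(H) such that ⟨w_i, w_i⟩ = 1 and ⟨w_i·d₁, w_j·d₂⟩ = 0 whenever i ≠ j and d₁, d₂ ∈ 𝔻. Then for all g ∈ G: σ(e_H·g) = ⟨σ,σ⟩ · Σ_{i=1}^m ⟨w_i·g, w_i⟩, where e_H = (1/|H|)·Σ_{h∈H} h and ⟨σ,σ⟩ is the inner product of σ with itself as a class function. -/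

import Mathlib

open scoped InnerProductSpace

open scoped InnerProductSpace
open LinearMap Module

set_option linter.unusedSectionVars false
set_option maxHeartbeats 1000000

namespace Stmt13Aux

variable {S : Type} [NormedAddCommGroup S] [InnerProductSpace ℝ S] [FiniteDimensional ℝ S]
variable {G : Type} [Group G]

lemma trace_eq_sum_inner' {ι : Type*} [Fintype ι] [DecidableEq ι]
    (b : OrthonormalBasis ι ℝ S) (T : S →ₗ[ℝ] S) :
    LinearMap.trace ℝ S T = ∑ i, ⟪b i, T (b i)⟫_ℝ := by
  rw [LinearMap.trace_eq_matrix_trace ℝ b.toBasis, Matrix.trace]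
  simp [Matrix.diag, LinearMap.toMatrix_apply, OrthonormalBasis.coe_toBasis,
    OrthonormalBasis.coe_toBasis_repr_apply, OrthonormalBasis.repr_apply_apply]

lemma trace_adjoint' (T : S →ₗ[ℝ] S) :
    LinearMap.trace ℝ S (LinearMap.adjoint T) = LinearMap.trace ℝ S T := by
  rw [trace_eq_sum_inner' (stdOrthonormalBasis ℝ S), trace_eq_sum_inner' (stdOrthonormalBasis ℝ S)]
  refine Finset.sum_congr rfl fun i _ => ?_
  rw [LinearMap.adjoint_inner_right, real_inner_comm]

lemma rho_inv_apply (ρ : Representation ℝ G S) (g : G) (x : S) : ρ g⁻¹ (ρ g x) = x := by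
  have : ρ g⁻¹ * ρ g = 1 := by rw [← map_mul, inv_mul_cancel, map_one]
  calc ρ g⁻¹ (ρ g x) = (ρ g⁻¹ * ρ g) x := rfl
    _ = x := by rw [this]; rfl

lemma rho_apply_inv (ρ : Representation ℝ G S) (g : G) (x : S) : ρ g (ρ g⁻¹ x) = x := by
  have := rho_inv_apply ρ g⁻¹ x; rwa [inv_inv] at this

lemma schur_inj (ρ : Representation ℝ G S)
    (hsimple : ∀ W : Submodule ℝ S, (∀ g, ∀ x ∈ W, ρ g x ∈ W) → W = ⊥ ∨ W = ⊤)
    {d : S →ₗ[ℝ] S} (hd : ∀ x, d ∘ₗ ρ x = ρ x ∘ₗ d) (hd0 : d ≠ 0) :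
    Function.Injective d := by
  have hcomm : ∀ (x : G) (y : S), d (ρ x y) = ρ x (d y) := fun x y =>
    congrArg (fun f : S →ₗ[ℝ] S => f y) (hd x)
  have hker : ∀ g, ∀ x ∈ LinearMap.ker d, ρ g x ∈ LinearMap.ker d := by
    intro g x hx
    rw [LinearMap.mem_ker] at hx ⊢
    rw [hcomm, hx, map_zero]
  rcases hsimple _ hker with h | h
  · exact LinearMap.ker_eq_bot.mp h
  · exfalso; apply hd0; ext x
    have hx : x ∈ LinearMap.ker d := h ▸ Submodule.mem_top
    simpa using hx

lemma inner_rho_left (ρ : Representation ℝ G S)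
    (horth : ∀ g (u v : S), ⟪ρ g u, ρ g v⟫_ℝ = ⟪u, v⟫_ℝ) (g : G) (u v : S) :
    ⟪ρ g u, v⟫_ℝ = ⟪u, ρ g⁻¹ v⟫_ℝ := by
  conv_lhs => rw [show v = ρ g (ρ g⁻¹ v) from (rho_apply_inv ρ g v).symm]
  rw [horth]

lemma adjoint_rho (ρ : Representation ℝ G S)
    (horth : ∀ g (u v : S), ⟪ρ g u, ρ g v⟫_ℝ = ⟪u, v⟫_ℝ) (g : G) :
    LinearMap.adjoint (ρ g : S →ₗ[ℝ] S) = ρ g⁻¹ := by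
  ext x
  refine ext_inner_left ℝ fun v => ?_
  rw [LinearMap.adjoint_inner_right]
  exact inner_rho_left ρ horth g v x

lemma adjoint_comm (ρ : Representation ℝ G S)
    (horth : ∀ g (u v : S), ⟪ρ g u, ρ g v⟫_ℝ = ⟪u, v⟫_ℝ)
    {d : S →ₗ[ℝ] S} (hd : ∀ x, d ∘ₗ ρ x = ρ x ∘ₗ d) (x : G) :
    LinearMap.adjoint d ∘ₗ ρ x = ρ x ∘ₗ LinearMap.adjoint d := by
  have h1 : (ρ x : S →ₗ[ℝ] S) = LinearMap.adjoint (ρ x⁻¹) := by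
    rw [adjoint_rho ρ horth, inv_inv]
  rw [h1, ← LinearMap.adjoint_comp, ← hd, LinearMap.adjoint_comp]

lemma comm_inner_scale (ρ : Representation ℝ G S)
    (horth : ∀ g (u v : S), ⟪ρ g u, ρ g v⟫_ℝ = ⟪u, v⟫_ℝ)
    (hnt : Nontrivial S)
    (hsimple : ∀ W : Submodule ℝ S, (∀ g, ∀ x ∈ W, ρ g x ∈ W) → W = ⊥ ∨ W = ⊤)
    {d : S →ₗ[ℝ] S} (hd : ∀ x, d ∘ₗ ρ x = ρ x ∘ₗ d) :
    ∃ μ : ℝ, ∀ u v : S, ⟪d u, d v⟫_ℝ = μ * ⟪u, v⟫_ℝ := by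
  haveI := hnt
  set T : S →ₗ[ℝ] S := LinearMap.adjoint d ∘ₗ d with hT
  have hTsym : T.IsSymmetric := by
    intro x y
    simp only [hT, LinearMap.comp_apply]
    rw [LinearMap.adjoint_inner_left, LinearMap.adjoint_inner_right]
  have hTcomm : ∀ x, T ∘ₗ ρ x = ρ x ∘ₗ T := by
    intro x
    rw [hT, LinearMap.comp_assoc, hd x, ← LinearMap.comp_assoc, adjoint_comm ρ horth hd x,
      LinearMap.comp_assoc]
  have hev := hTsym.hasEigenvalue_iSup_of_finiteDimensional
  set μ := (⨆ x : { x : S // x ≠ 0 }, RCLike.re ⟪T x, (x : S)⟫_ℝ / (‖(x : S)‖ : ℝ) ^ 2) with hμ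
  obtain ⟨v, hvmem, hv0⟩ := (Submodule.ne_bot_iff _).mp hev
  have hveq : T v = μ • v := by
    have := hvmem
    rw [Module.End.mem_eigenspace_iff] at this
    exact this
  have hTid : T = μ • (LinearMap.id : S →ₗ[ℝ] S) := by
    by_contra hne
    have hdcomm : ∀ x, (T - μ • LinearMap.id) ∘ₗ ρ x = ρ x ∘ₗ (T - μ • LinearMap.id) := by
      intro x; ext y
      simp only [LinearMap.comp_apply, LinearMap.sub_apply, LinearMap.smul_apply,
        LinearMap.id_apply, map_sub, map_smul]
      rw [show T (ρ x y) = ρ x (T y) from congrArg (fun f : S →ₗ[ℝ] S => f y) (hTcomm x)]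
    have hinj := schur_inj ρ hsimple hdcomm (fun h => hne (by rwa [sub_eq_zero] at h))
    have : (T - μ • (LinearMap.id : S →ₗ[ℝ] S)) v = 0 := by
      simp [hveq]
    exact hv0 (hinj (by simpa using this))
  refine ⟨μ, fun u v => ?_⟩
  have : ⟪d u, d v⟫_ℝ = ⟪u, T v⟫_ℝ := by
    rw [hT, LinearMap.comp_apply, LinearMap.adjoint_inner_right]
  rw [this, hTid]
  simp [real_inner_smul_right]

lemma schur_dim [Fintype G] (ρ : Representation ℝ G S) :
    (Fintype.card G : ℝ)⁻¹ * ∑ x : G, LinearMap.trace ℝ S (ρ x⁻¹) * LinearMap.trace ℝ S (ρ x)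
      = finrank ℝ (Representation.linHom ρ ρ).invariants := by
  haveI : Invertible (Fintype.card G : ℝ) :=
    invertibleOfNonzero (Nat.cast_ne_zero.mpr Fintype.card_ne_zero)
  have h := FDRep.average_char_eq_finrank_invariants (FDRep.of (Representation.linHom ρ ρ))
  rw [Nat.card_eq_fintype_card] at h
  calc (Fintype.card G : ℝ)⁻¹ * ∑ x : G, LinearMap.trace ℝ S (ρ x⁻¹) * LinearMap.trace ℝ S (ρ x)
      = (Fintype.card G : ℝ)⁻¹ * ∑ x : G, (FDRep.of (Representation.linHom ρ ρ)).character x := by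
        congr 1; exact Finset.sum_congr rfl fun x _ =>
          (FDRep.char_linHom (FDRep.of ρ) (FDRep.of ρ) x).symm
    _ = finrank ℝ (Representation.linHom ρ ρ).invariants := h

end Stmt13Aux

/-- (Theorem `t:sumcosinechar`.) Let `S` be a simple real `G`-module
with `G`-invariant inner product, character `σ`, endomorphism ring `𝔻`, and let
`w₁,…,w_m` be a `𝔻`-basis of the Wythoff space `W = Fix_S(H)` with `⟨w_i,w_i⟩ = 1` and
`⟨w_i d₁, w_j d₂⟩ = 0` for `i ≠ j`, `d₁,d₂ ∈ 𝔻`. Then for all `g ∈ G`: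
`σ(e_H·g) = ⟨σ,σ⟩ · Σ_i ⟨w_i·g, w_i⟩`. -/
theorem stmt13 {G : Type} [Group G] [Finite G] (H : Subgroup G)
    {S : Type} [NormedAddCommGroup S] [InnerProductSpace ℝ S] [FiniteDimensional ℝ S]
    (ρ : Representation ℝ G S)
    (horth : ∀ g (u v : S), ⟪ρ g u, ρ g v⟫_ℝ = ⟪u, v⟫_ℝ)
    (hnt : Nontrivial S)
    (hsimple : ∀ W : Submodule ℝ S, (∀ g, ∀ x ∈ W, ρ g x ∈ W) → W = ⊥ ∨ W = ⊤)
    (m : ℕ) (w : Fin m → S)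
    (hfix : ∀ i, ∀ h ∈ H, ρ h (w i) = w i)
    (hnorm : ∀ i, ⟪w i, w i⟫_ℝ = 1)
    (horthD : ∀ i j, i ≠ j → ∀ d₁ d₂ : S →ₗ[ℝ] S,
      (∀ g, d₁ ∘ₗ ρ g = ρ g ∘ₗ d₁) → (∀ g, d₂ ∘ₗ ρ g = ρ g ∘ₗ d₂) →
      ⟪d₁ (w i), d₂ (w j)⟫_ℝ = 0)
    -- the `w_i` span the Wythoff space over `𝔻 = End_{ℝG}(S)`:
    (hspan : ∀ v : S, (∀ h ∈ H, ρ h v = v) →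
      ∃ c : Fin m → (S →ₗ[ℝ] S),
        (∀ i g, c i ∘ₗ ρ g = ρ g ∘ₗ c i) ∧ v = ∑ i, c i (w i)) :
    ∀ g : G,
      -- `σ(e_H·g) = (1/|H|)·Σ_{h∈H} σ(hg)`:
      (Nat.card H : ℝ)⁻¹ * ∑ᶠ h : H, LinearMap.trace ℝ S (ρ ((h : G) * g))
      -- `= ⟨σ,σ⟩ · Σ_i ⟨w_i·g, w_i⟩`:
      = ((Nat.card G : ℝ)⁻¹ * ∑ᶠ x : G,
            LinearMap.trace ℝ S (ρ x) * LinearMap.trace ℝ S (ρ x))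
        * ∑ i, ⟪ρ g (w i), w i⟫_ℝ := by
  
  intro g
  classical
  haveI := hnt
  haveI : Fintype G := Fintype.ofFinite G
  haveI : Fintype ↥H := Fintype.ofFinite ↥H

  -- the commutant 𝔻 as a submodule of End
  set Dsub : Submodule ℝ (S →ₗ[ℝ] S) :=
    { carrier := {d | ∀ x : G, d ∘ₗ ρ x = ρ x ∘ₗ d}
      add_mem' := fun ha hb x => by
        rw [LinearMap.add_comp, LinearMap.comp_add, ha x, hb x]
      zero_mem' := fun x => by rw [LinearMap.zero_comp, LinearMap.comp_zero]
      smul_mem' := fun c a ha x => by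
        rw [LinearMap.smul_comp, LinearMap.comp_smul, ha x] } with hDsubdef
  set r : ℕ := finrank ℝ ↥Dsub with hrdef
  -- ## Right-hand side factor equals r
  have htrinv : ∀ x : G, LinearMap.trace ℝ S (ρ x⁻¹) = LinearMap.trace ℝ S (ρ x) := fun x => by
    rw [← Stmt13Aux.adjoint_rho ρ horth, Stmt13Aux.trace_adjoint']
  have hDeq : (Representation.linHom ρ ρ).invariants = Dsub := by
    ext f
    rw [Representation.mem_invariants]
    constructor
    · intro hf x
      ext y
      have h1 : (Representation.linHom ρ ρ) x f = f := hf x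
      have h2 : ρ x (f (ρ x⁻¹ (ρ x y))) = f (ρ x y) :=
        congrArg (fun F : S →ₗ[ℝ] S => F (ρ x y)) h1
      rw [Stmt13Aux.rho_inv_apply] at h2
      exact h2.symm
    · intro hf x
      ext y
      show ρ x (f (ρ x⁻¹ y)) = f y
      have h2 : f (ρ x⁻¹ y) = ρ x⁻¹ (f y) :=
        congrArg (fun F : S →ₗ[ℝ] S => F y) (hf x⁻¹)
      rw [h2, Stmt13Aux.rho_apply_inv]
  have hRfac : (Nat.card G : ℝ)⁻¹ * ∑ᶠ x : G,
      LinearMap.trace ℝ S (ρ x) * LinearMap.trace ℝ S (ρ x) = (r : ℝ) := by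
    rw [finsum_eq_sum_of_fintype, Nat.card_eq_fintype_card]
    have := Stmt13Aux.schur_dim (ρ := ρ)
    rw [hDeq] at this
    rw [← this]
    congr 1
    exact Finset.sum_congr rfl fun x _ => by rw [htrinv x]
  -- ## The averaging operator P
  have hnH0 : (Nat.card ↥H : ℝ) ≠ 0 := Nat.cast_ne_zero.mpr Nat.card_pos.ne'
  set P : S →ₗ[ℝ] S := (Nat.card ↥H : ℝ)⁻¹ • ∑ h : ↥H, (ρ (h : G) : S →ₗ[ℝ] S) with hPdef
  have hPapply : ∀ x : S, P x = (Nat.card ↥H : ℝ)⁻¹ • ∑ h : ↥H, ρ (h : G) x := by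
    intro x
    simp [hPdef, LinearMap.sum_apply]
  have hPfix : ∀ x : S, (∀ h ∈ H, ρ h x = x) → P x = x := by
    intro x hx
    rw [hPapply]
    rw [Finset.sum_congr rfl (fun (h : ↥H) _ => hx (h : G) h.2), Finset.sum_const, Finset.card_univ,
      ← Nat.card_eq_fintype_card, ← Nat.cast_smul_eq_nsmul ℝ, smul_smul,
      inv_mul_cancel₀ hnH0, one_smul]
  have hPmem : ∀ (x : S), ∀ h' ∈ H, ρ h' (P x) = P x := by
    intro x h' hh'
    rw [hPapply, map_smul, map_sum]
    congr 1
    refine Fintype.sum_equiv (Equiv.mulLeft (⟨h', hh'⟩ : ↥H))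
      (fun h : ↥H => ρ h' (ρ (h : G) x)) (fun h : ↥H => ρ (h : G) x) fun h => ?_
    show ρ h' (ρ (h : G) x) = ρ ((⟨h', hh'⟩ * h : ↥H) : G) x
    rw [show ((⟨h', hh'⟩ * h : ↥H) : G) = h' * (h : G) from rfl, map_mul]
    rfl
  have hPsym : ∀ x y : S, ⟪P x, y⟫_ℝ = ⟪x, P y⟫_ℝ := by
    intro x y
    rw [hPapply x, hPapply y, real_inner_smul_left, real_inner_smul_right, sum_inner, inner_sum]
    congr 1
    refine Fintype.sum_equiv (Equiv.inv ↥H)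
      (fun h : ↥H => ⟪ρ (h : G) x, y⟫_ℝ) (fun h : ↥H => ⟪x, ρ (h : G) y⟫_ℝ) fun h => ?_
    show ⟪ρ (h : G) x, y⟫_ℝ = ⟪x, ρ ((h⁻¹ : ↥H) : G) y⟫_ℝ
    rw [Stmt13Aux.inner_rho_left ρ horth]
    congr 1
  have hLfac : (Nat.card ↥H : ℝ)⁻¹ * ∑ᶠ h : ↥H, LinearMap.trace ℝ S (ρ ((h : G) * g))
      = LinearMap.trace ℝ S ((ρ g : S →ₗ[ℝ] S) ∘ₗ P) := by
    have hcomp : (ρ g : S →ₗ[ℝ] S) ∘ₗ P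
        = (Nat.card ↥H : ℝ)⁻¹ •
            ∑ h : ↥H, ((ρ g : S →ₗ[ℝ] S) ∘ₗ (ρ (h : G) : S →ₗ[ℝ] S)) := by
      ext y
      simp [hPapply, LinearMap.sum_apply, map_smul, map_sum]
    rw [hcomp, map_smul, map_sum, finsum_eq_sum_of_fintype, smul_eq_mul]
    congr 1
    refine Finset.sum_congr rfl fun h _ => ?_
    rw [map_mul, LinearMap.trace_mul_comm, Module.End.mul_eq_comp]
  -- ## the blocks D_i
  have hwne : ∀ i, w i ≠ 0 := fun i h => by
    have h1 := hnorm i; rw [h, inner_zero_left] at h1; exact one_ne_zero h1.symm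
  set Fi : Fin m → (↥Dsub →ₗ[ℝ] S) := fun i =>
    { toFun := fun d => (d : S →ₗ[ℝ] S) (w i)
      map_add' := fun a b => by simp
      map_smul' := fun cc a => by simp } with hFidef
  set Di : Fin m → Submodule ℝ S := fun i => LinearMap.range (Fi i) with hDidef
  have hcommpt : ∀ (d : ↥Dsub) (x : G) (y : S),
      ρ x ((d : S →ₗ[ℝ] S) y) = (d : S →ₗ[ℝ] S) (ρ x y) := by
    intro d x y
    exact (congrArg (fun F : S →ₗ[ℝ] S => F y) (d.2 x)).symm
  have hFinj : ∀ i, Function.Injective (Fi i) := by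
    intro i
    rw [injective_iff_map_eq_zero]
    intro d hd
    by_contra hd0
    have hd0' : (d : S →ₗ[ℝ] S) ≠ 0 := fun hh => hd0 (Subtype.ext hh)
    have hinj := Stmt13Aux.schur_inj ρ hsimple d.2 hd0'
    have heq : (d : S →ₗ[ℝ] S) (w i) = (d : S →ₗ[ℝ] S) 0 := by
      rw [map_zero]; exact hd
    exact hwne i (hinj heq)
  have hrank : ∀ i, finrank ℝ ↥(Di i) = r := fun i =>
    LinearMap.finrank_range_of_inj (hFinj i)
  set bi : ∀ i : Fin m, OrthonormalBasis (Fin r) ℝ ↥(Di i) := fun i =>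
    (stdOrthonormalBasis ℝ ↥(Di i)).reindex (finCongr (hrank i)) with hbidef
  set c : Fin m × Fin r → S := fun p => ((bi p.1) p.2 : S) with hcdef
  have hcmem : ∀ p, c p ∈ Di p.1 := fun p => ((bi p.1) p.2).2
  have hcd : ∀ p : Fin m × Fin r, ∃ d : ↥Dsub, (d : S →ₗ[ℝ] S) (w p.1) = c p := by
    intro p
    obtain ⟨d, hd⟩ := hcmem p
    exact ⟨d, hd⟩
  have hDfix : ∀ i, ∀ x ∈ Di i, ∀ h ∈ H, ρ h x = x := by
    intro i x hx h hh
    obtain ⟨d, rfl⟩ := hx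
    show ρ h ((d : S →ₗ[ℝ] S) (w i)) = (d : S →ₗ[ℝ] S) (w i)
    rw [hcommpt d h (w i), hfix i h hh]
  have hunit : ∀ (i : Fin m) (x : S), x ∈ Di i → ⟪x, x⟫_ℝ = 1 →
      ⟪x, ρ g x⟫_ℝ = ⟪w i, ρ g (w i)⟫_ℝ := by
    intro i x hx hx1
    obtain ⟨d, rfl⟩ := hx
    obtain ⟨μ, hμ⟩ := Stmt13Aux.comm_inner_scale ρ horth hnt hsimple
      (d := (d : S →ₗ[ℝ] S)) d.2
    have hμ1 : μ = 1 := by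
      have h2 := hμ (w i) (w i)
      rw [hnorm i, mul_one] at h2
      rw [show ⟪(d : S →ₗ[ℝ] S) (w i), (d : S →ₗ[ℝ] S) (w i)⟫_ℝ = 1 from hx1] at h2
      exact h2.symm
    show ⟪(d : S →ₗ[ℝ] S) (w i), ρ g ((d : S →ₗ[ℝ] S) (w i))⟫_ℝ = ⟪w i, ρ g (w i)⟫_ℝ
    rw [hcommpt d g (w i), hμ, hμ1, one_mul]
  -- ## orthonormality of the collected family
  have hONc : Orthonormal ℝ c := by
    rw [orthonormal_iff_ite]
    intro p q
    by_cases hpq : p.1 = q.1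
    · obtain ⟨i, j⟩ := p
      obtain ⟨i', j'⟩ := q
      simp only at hpq
      subst hpq
      have h2 := orthonormal_iff_ite.mp (bi i).orthonormal j j'
      rw [Submodule.coe_inner] at h2
      show ⟪c (i, j), c (i, j')⟫_ℝ = _
      rw [hcdef]
      simp only []
      rw [h2]
      by_cases hj : j = j' <;> simp [hj, Prod.ext_iff]
    · obtain ⟨d₁, hd₁⟩ := hcd p
      obtain ⟨d₂, hd₂⟩ := hcd q
      have h0 := horthD p.1 q.1 hpq (d₁ : S →ₗ[ℝ] S) (d₂ : S →ₗ[ℝ] S) d₁.2 d₂.2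
      rw [hd₁, hd₂] at h0
      rw [h0, if_neg (fun hc => hpq (by rw [hc]))]
  have hcinj : Function.Injective c := hONc.linearIndependent.injective
  -- ## the span of the family contains the Wythoff space
  have hDile : ∀ i, Di i ≤ Submodule.span ℝ (Set.range c) := by
    intro i x hx
    have hx' : (⟨x, hx⟩ : ↥(Di i)) = ∑ j : Fin r, (bi i).repr ⟨x, hx⟩ j • bi i j :=
      ((bi i).sum_repr ⟨x, hx⟩).symm
    have hxx : x = ∑ j : Fin r, (bi i).repr ⟨x, hx⟩ j • c (i, j) := by
      have h4 := congrArg (fun z : ↥(Di i) => (z : S)) hx'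
      simpa [hcdef] using h4
    rw [hxx]
    exact Submodule.sum_mem _ fun j _ =>
      Submodule.smul_mem _ _ (Submodule.subset_span ⟨(i, j), rfl⟩)
  have hWle : ∀ v : S, (∀ h ∈ H, ρ h v = v) → v ∈ Submodule.span ℝ (Set.range c) := by
    intro v hv
    obtain ⟨cf, hcf, hveq⟩ := hspan v hv
    rw [hveq]
    refine Submodule.sum_mem _ fun i _ => hDile i ?_
    exact ⟨⟨cf i, fun x => hcf i x⟩, rfl⟩
  -- ## extend to an orthonormal basis of S
  have hONsub : Orthonormal ℝ ((↑) : Set.range c → S) := hONc.toSubtypeRange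
  obtain ⟨u, b, hcu, hb⟩ := hONsub.exists_orthonormalBasis_extension
  set t : Finset S := Finset.univ.image c with htdef
  have htu : t ⊆ u := by
    intro e he
    rw [htdef, Finset.mem_image] at he
    obtain ⟨p, _, rfl⟩ := he
    exact hcu ⟨p, rfl⟩
  have htrace : LinearMap.trace ℝ S ((ρ g : S →ₗ[ℝ] S) ∘ₗ P)
      = ∑ e ∈ u, ⟪e, ρ g (P e)⟫_ℝ := by
    rw [Stmt13Aux.trace_eq_sum_inner' b]
    rw [← Finset.sum_coe_sort u (fun e => ⟪e, ρ g (P e)⟫_ℝ)]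
    exact Finset.sum_congr rfl fun i _ => by simp only [hb, LinearMap.comp_apply]
  have hzero : ∀ e ∈ u, e ∉ t → ⟪e, ρ g (P e)⟫_ℝ = 0 := by
    intro e heu het
    have horthv : ∀ p, ⟪e, c p⟫_ℝ = 0 := by
      intro p
      have h1 : c p ∈ u := htu (by
        rw [htdef]; exact Finset.mem_image.mpr ⟨p, Finset.mem_univ _, rfl⟩)
      have hne : (⟨e, heu⟩ : ↥u) ≠ ⟨c p, h1⟩ := by
        intro hcontra
        apply het
        have h5 : e = c p := congrArg Subtype.val hcontra
        rw [h5, htdef]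
        exact Finset.mem_image.mpr ⟨p, Finset.mem_univ _, rfl⟩
      have h2 := b.orthonormal.2 hne
      rw [hb] at h2
      exact h2
    set K : Submodule ℝ S :=
      { carrier := {x | ⟪e, x⟫_ℝ = 0}
        add_mem' := fun ha hb' => by
          simp only [Set.mem_setOf_eq] at *
          rw [inner_add_right, ha, hb', add_zero]
        zero_mem' := by simp
        smul_mem' := fun a x hx => by
          simp only [Set.mem_setOf_eq] at *
          rw [inner_smul_right, hx, mul_zero] } with hKdef
    have hspanK : Submodule.span ℝ (Set.range c) ≤ K := by
      rw [Submodule.span_le]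
      rintro x ⟨p, rfl⟩
      exact horthv p
    have hPe : P e = 0 := by
      have h3 : ⟪P e, P e⟫_ℝ = 0 := by
        rw [hPsym]
        have h6 : P (P e) ∈ Submodule.span ℝ (Set.range c) :=
          hWle _ (fun h hh => hPmem (P e) h hh)
        exact hspanK h6
      exact inner_self_eq_zero.mp h3
    rw [hPe, map_zero, inner_zero_right]
  have hmain : ∑ e ∈ u, ⟪e, ρ g (P e)⟫_ℝ = (r : ℝ) * ∑ i, ⟪w i, ρ g (w i)⟫_ℝ := by
    rw [← Finset.sum_subset htu hzero]
    rw [htdef, Finset.sum_image (fun x _ y _ hxy => hcinj hxy)]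
    have hstep : ∀ p : Fin m × Fin r, ⟪c p, ρ g (P (c p))⟫_ℝ = ⟪w p.1, ρ g (w p.1)⟫_ℝ := by
      intro p
      rw [hPfix (c p) (fun h hh => hDfix p.1 (c p) (hcmem p) h hh)]
      refine hunit p.1 (c p) (hcmem p) ?_
      have hn := hONc.1 p
      rw [real_inner_self_eq_norm_mul_norm, hn, mul_one]
    rw [Finset.sum_congr rfl fun p _ => hstep p]
    rw [Fintype.sum_prod_type]
    have hconst : ∀ i : Fin m, (∑ _j : Fin r, ⟪w i, ρ g (w i)⟫_ℝ)
        = (r : ℝ) * ⟪w i, ρ g (w i)⟫_ℝ := by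
      intro i
      rw [Finset.sum_const, Finset.card_univ, Fintype.card_fin, nsmul_eq_mul]
    rw [Finset.sum_congr rfl fun i _ => hconst i, ← Finset.mul_sum]
  -- ## final assembly
  rw [hLfac, htrace, hmain, hRfac]
  congr 1
  exact Finset.sum_congr rfl fun i _ => real_inner_comm _ _
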